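/- For every positive integer n and every integer k with 0 ≤ k ≤ n-1, the number of 132-avoiding permutations of [n] having exactly k descents equals (1/n)·C(n,k)·C(n,k+1), where C(a,b) denotes the binomial coefficient. -/

import Mathlib

/-- A permutation `p` of `[n]` (modelled on `Fin n`, 0-based) is 132-avoiding if there
are no positions `i < j < k` with `p i < p k < p j`. -/
def Avoids132 {n : ℕ} (p : Equiv.Perm (Fin n)) : Prop :=
  ¬ ∃ i j k : Fin n, i < j ∧ j < k ∧ p i < p k ∧ p k < p j

/-- The descent set of `p`, in the 1-based convention of the paper: `i ∈ D(p)` iff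
`1 ≤ i ≤ n-1` and `p_i > p_{i+1}`, where `p_i` denotes the `i`-th entry of `p` in
1-based indexing (so `p_i = p ⟨i-1⟩` in 0-based indexing). -/
def DescentSet {n : ℕ} (p : Equiv.Perm (Fin n)) : Finset ℕ :=
  (Finset.range n).filter (fun i => ∃ h : 1 ≤ i ∧ i < n, p ⟨i, h.2⟩ < p ⟨i - 1, by omega⟩)

open Finset

namespace Stmt3

variable {n : ℕ}

def cd (p : Equiv.Perm (Fin n)) (i : Fin n) : ℕ :=
  (Finset.univ.filter (fun j => i < j ∧ p j < p i)).card

lemma cd_bound (p : Equiv.Perm (Fin n)) (i : Fin n) : cd p i + i.val + 1 ≤ n := by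
  have h1 : (Finset.univ.filter (fun j => i < j ∧ p j < p i)) ⊆ Finset.Ioi i := by
    intro j hj
    simp only [mem_filter] at hj
    simpa using hj.2.1
  have h2 := Finset.card_le_card h1
  rw [Fin.card_Ioi] at h2
  have := i.isLt
  unfold cd
  omega

lemma cd_adj (p : Equiv.Perm (Fin n)) (i : ℕ) (h : i + 1 < n) :
    p ⟨i+1, h⟩ < p ⟨i, by omega⟩ ↔ cd p ⟨i+1, h⟩ < cd p ⟨i, by omega⟩ := by
  set i0 : Fin n := ⟨i, by omega⟩ with hi0def
  set i1 : Fin n := ⟨i+1, h⟩ with hi1def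
  have hi01 : i0 < i1 := by rw [Fin.lt_def]; show i < i + 1; omega
  constructor
  · intro hd
    have hsub : Finset.univ.filter (fun j => i1 < j ∧ p j < p i1) ⊂
        Finset.univ.filter (fun j => i0 < j ∧ p j < p i0) := by
      constructor
      · intro j hj
        simp only [mem_filter, mem_univ, true_and] at hj ⊢
        exact ⟨lt_trans hi01 hj.1, lt_trans hj.2 hd⟩
      · intro hsub'
        have := hsub' (by simp only [mem_filter, mem_univ, true_and]; exact ⟨hi01, hd⟩ :
          i1 ∈ Finset.univ.filter (fun j => i0 < j ∧ p j < p i0))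
        simp only [mem_filter, mem_univ, true_and] at this
        exact absurd this.1 (lt_irrefl i1)
    exact Finset.card_lt_card hsub
  · intro hc
    by_contra hnd
    have hne : p i0 ≠ p i1 := fun he => by
      have : i0 = i1 := p.injective he
      simp [i0, i1, Fin.ext_iff] at this
    have hd : p i0 < p i1 := lt_of_le_of_ne (not_lt.mp hnd) hne
    have hsub : Finset.univ.filter (fun j => i0 < j ∧ p j < p i0) ⊆
        Finset.univ.filter (fun j => i1 < j ∧ p j < p i1) := by
      intro j hj
      simp only [mem_filter, mem_univ, true_and] at hj ⊢
      have hj1 : j ≠ i1 := fun he => by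
        rw [he] at hj
        exact absurd (lt_trans hj.2 hd) (lt_irrefl _)
      refine ⟨?_, lt_trans hj.2 hd⟩
      have h2 := hj.1
      rw [Fin.lt_def] at h2 ⊢
      have h2' : i < j.val := h2
      have hjv : j.val ≠ i + 1 := fun hv => hj1 (Fin.ext hv)
      show i + 1 < j.val
      omega
    exact absurd (Finset.card_le_card hsub) (not_le.mpr hc)

lemma adj_pattern (p : Equiv.Perm (Fin n)) (a : ℕ) (h1 : a + 1 < n) (k : Fin n)
    (hk : (⟨a+1, h1⟩ : Fin n) < k) (hp1 : p ⟨a, by omega⟩ < p k)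
    (hp2 : p k < p ⟨a+1, h1⟩) : cd p ⟨a, by omega⟩ < cd p ⟨a+1, h1⟩ := by
  set i0 : Fin n := ⟨a, by omega⟩ with hi0def
  set i1 : Fin n := ⟨a+1, h1⟩ with hi1def
  have hi01 : i0 < i1 := by rw [Fin.lt_def]; show a < a + 1; omega
  have hd : p i0 < p i1 := lt_trans hp1 hp2
  have hsub : Finset.univ.filter (fun j => i0 < j ∧ p j < p i0) ⊂
      Finset.univ.filter (fun j => i1 < j ∧ p j < p i1) := by
    constructor
    · intro j hj
      simp only [mem_filter, mem_univ, true_and] at hj ⊢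
      obtain ⟨hja, hjp⟩ := hj
      have hj1 : j ≠ i1 := fun he => by
        rw [he] at hjp
        exact absurd (lt_trans hjp hd) (lt_irrefl _)
      refine ⟨?_, lt_trans hjp hd⟩
      rw [Fin.lt_def] at hja ⊢
      have hja' : a < j.val := hja
      have hjv : j.val ≠ a + 1 := fun hv => hj1 (Fin.ext hv)
      show a + 1 < j.val
      omega
    · intro hsub'
      have hkmem : k ∈ Finset.univ.filter (fun j => i1 < j ∧ p j < p i1) := by
        simp only [mem_filter, mem_univ, true_and]
        exact ⟨hk, hp2⟩
      have := hsub' hkmem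
      simp only [mem_filter, mem_univ, true_and] at this
      exact absurd hp1 (not_lt.mpr (le_of_lt this.2))
  exact Finset.card_lt_card hsub

lemma reduce (p : Equiv.Perm (Fin n)) : ∀ d (i j k : Fin n), j.val - i.val ≤ d → i < j → j < k →
    p i < p k → p k < p j →
    ∃ (a : ℕ) (h : a + 1 < n), cd p ⟨a, by omega⟩ < cd p ⟨a+1, h⟩ := by
  intro d
  induction d with
  | zero => intro i j k hd hij; rw [Fin.lt_def] at hij; omega
  | succ d ih =>
    intro i j k hd hij hjk h1 h2
    by_cases hadj : j.val = i.val + 1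
    · have hn : i.val + 1 < n := hadj ▸ j.isLt
      have hjeq : (⟨i.val + 1, hn⟩ : Fin n) = j := Fin.ext hadj.symm
      refine ⟨i.val, hn, adj_pattern p i.val hn k (hjeq ▸ hjk) h1 (hjeq ▸ h2)⟩
    · have hij' : i.val + 2 ≤ j.val := by rw [Fin.lt_def] at hij; omega
      set j' : Fin n := ⟨j.val - 1, by omega⟩ with hj'def
      have hij'2 : i < j' := by rw [Fin.lt_def]; show i.val < j.val - 1; omega
      have hj'j : j' < j := by rw [Fin.lt_def]; show j.val - 1 < j.val; omega
      rcases lt_trichotomy (p j') (p k) with hc | hc | hc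
      · have hn' : j'.val + 1 < n := by
          have := k.isLt
          rw [Fin.lt_def] at hjk
          show j.val - 1 + 1 < n
          omega
        have hjeq : (⟨j'.val + 1, hn'⟩ : Fin n) = j := Fin.ext (by show j.val - 1 + 1 = j.val; omega)
        exact ⟨j'.val, hn', adj_pattern p j'.val hn' k (hjeq ▸ hjk) hc (hjeq ▸ h2)⟩
      · exfalso
        have heq : j' = k := p.injective hc
        rw [heq] at hj'j
        exact absurd (lt_trans hj'j hjk) (lt_irrefl _)
      · exact ih i j' k (by show j.val - 1 - i.val ≤ d; omega) hij'2 (lt_trans hj'j hjk) h1 hc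

lemma avoids_iff (p : Equiv.Perm (Fin n)) :
    Avoids132 p ↔ ∀ (i : ℕ) (h : i + 1 < n), cd p ⟨i+1, h⟩ ≤ cd p ⟨i, by omega⟩ := by
  constructor
  · intro hav i h
    by_contra hlt
    push_neg at hlt
    set i0 : Fin n := ⟨i, by omega⟩ with hi0def
    set i1 : Fin n := ⟨i+1, h⟩ with hi1def
    have hlt' : cd p i0 < cd p i1 := hlt
    have hi01 : i0 < i1 := by rw [Fin.lt_def]; show i < i + 1; omega
    have hnd : ¬ (p i1 < p i0) := fun hd =>
      absurd hlt (not_lt.mpr (le_of_lt ((cd_adj p i h).mp hd)))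
    have hne : p i0 ≠ p i1 := fun he => by
      have : i0 = i1 := p.injective he
      simp [i0, i1, Fin.ext_iff] at this
    have hd : p i0 < p i1 := lt_of_le_of_ne (not_lt.mp hnd) hne
    -- Si = A ⊆ B strictly
    have hSiA : Finset.univ.filter (fun j => i0 < j ∧ p j < p i0) ⊆
        Finset.univ.filter (fun j => i1 < j ∧ p j < p i0) := by
      intro j hj
      simp only [mem_filter, mem_univ, true_and] at hj ⊢
      have hj1 : j ≠ i1 := fun he => by
        rw [he] at hj
        exact absurd (lt_trans hj.2 hd) (lt_irrefl _)
      refine ⟨?_, hj.2⟩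
      have h2 := hj.1
      rw [Fin.lt_def] at h2 ⊢
      have h2' : i < j.val := h2
      have hjv : j.val ≠ i + 1 := fun hv => hj1 (Fin.ext hv)
      show i + 1 < j.val
      omega
    have hAB : Finset.univ.filter (fun j => i1 < j ∧ p j < p i0) ⊆
        Finset.univ.filter (fun j => i1 < j ∧ p j < p i1) := by
      intro j hj
      simp only [mem_filter, mem_univ, true_and] at hj ⊢
      exact ⟨hj.1, lt_trans hj.2 hd⟩
    have hASi : Finset.univ.filter (fun j => i1 < j ∧ p j < p i0) ⊆
        Finset.univ.filter (fun j => i0 < j ∧ p j < p i0) := by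
      intro j hj
      simp only [mem_filter, mem_univ, true_and] at hj ⊢
      exact ⟨lt_trans hi01 hj.1, hj.2⟩
    have hcardA : (Finset.univ.filter (fun j => i1 < j ∧ p j < p i0)).card ≤ cd p i0 :=
      Finset.card_le_card hASi
    have hcards : (Finset.univ.filter (fun j => i1 < j ∧ p j < p i0)).card <
        (Finset.univ.filter (fun j => i1 < j ∧ p j < p i1)).card := by
      unfold cd at hlt' hcardA
      omega
    have hss : Finset.univ.filter (fun j => i1 < j ∧ p j < p i0) ⊂
        Finset.univ.filter (fun j => i1 < j ∧ p j < p i1) :=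
      ⟨hAB, fun hcon => absurd (Finset.card_le_card hcon) (not_le.mpr hcards)⟩
    obtain ⟨c, hcB, hcA⟩ := Finset.exists_of_ssubset hss
    simp only [mem_filter, mem_univ, true_and, not_and] at hcB hcA
    have hnc : ¬ (p c < p i0) := fun hx => hcA hcB.1 hx
    have hnec : p i0 ≠ p c := fun he => by
      have : i0 = c := p.injective he
      rw [← this] at hcB
      exact absurd (lt_trans hi01 hcB.1) (lt_irrefl _)
    exact hav ⟨i0, i1, c, hi01, hcB.1, lt_of_le_of_ne (not_lt.mp hnc) hnec, hcB.2⟩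
  · intro hmono ⟨i, j, k, hij, hjk, h1, h2⟩
    obtain ⟨a, ha, hcd⟩ := reduce p j.val i j k (by omega) hij hjk h1 h2
    exact absurd (hmono a ha) (not_le.mpr hcd)

lemma cd_lt_of_agree (p q : Equiv.Perm (Fin n)) (i : Fin n)
    (hagree : ∀ m, m < i → p m = q m) (hlt : p i < q i) : cd p i < cd q i := by
  classical
  set U : Finset (Fin n) := Finset.univ.filter (fun v => ∀ m, m < i → p m ≠ v) with hU
  have hcard : ∀ r : Equiv.Perm (Fin n), (∀ m, m < i → p m = r m) →
      cd r i = ((Finset.univ.filter (fun v => ∀ m, m < i → p m ≠ v)).filter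
        (fun v => v < r i)).card := by
    intro r hr
    apply Finset.card_bij (fun j _ => r j)
    · intro j hj
      simp only [mem_filter, mem_univ, true_and] at hj ⊢
      refine ⟨fun m hm => ?_, hj.2⟩
      rw [hr m hm]
      intro he
      have : m = j := r.injective he
      rw [this] at hm
      exact absurd (lt_trans hm hj.1) (lt_irrefl _)
    · intro j1 hj1 j2 hj2 he
      exact r.injective he
    · intro v hv
      simp only [mem_filter, mem_univ, true_and] at hv
      refine ⟨r.symm v, ?_, r.apply_symm_apply v⟩
      simp only [mem_filter, mem_univ, true_and, Equiv.apply_symm_apply]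
      refine ⟨?_, hv.2⟩
      rcases lt_trichotomy (r.symm v) i with hc | hc | hc
      · exact absurd (hr _ hc ▸ (r.apply_symm_apply v)) (hv.1 _ hc)
      · exfalso
        rw [← hc, r.apply_symm_apply] at hv
        exact absurd hv.2 (lt_irrefl _)
      · exact hc
  have hp := hcard p (fun m _ => rfl)
  have hq := hcard q hagree
  rw [hp, hq]
  apply Finset.card_lt_card
  constructor
  · intro v hv
    simp only [mem_filter, mem_univ, true_and] at hv ⊢
    exact ⟨hv.1, lt_trans hv.2 hlt⟩
  · intro hcon
    have hpi : p i ∈ (Finset.univ.filter (fun v => ∀ m, m < i → p m ≠ v)).filter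
        (fun v => v < q i) := by
      simp only [mem_filter, mem_univ, true_and]
      refine ⟨fun m hm he => ?_, hlt⟩
      have : m = i := p.injective he
      rw [this] at hm
      exact lt_irrefl _ hm
    have := hcon hpi
    simp only [mem_filter, mem_univ, true_and] at this
    exact absurd this.2 (lt_irrefl _)

lemma cd_inj (p q : Equiv.Perm (Fin n)) (h : ∀ i, cd p i = cd q i) : p = q := by
  classical
  by_contra hne
  have hex : (Finset.univ.filter (fun i => p i ≠ q i)).Nonempty := by
    rw [Finset.filter_nonempty_iff]
    by_contra hc
    push_neg at hc
    exact hne (Equiv.ext (fun i => hc i (mem_univ i)))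
  set s := Finset.univ.filter (fun i => p i ≠ q i)
  set i := s.min' hex
  have hi : p i ≠ q i := by
    have : i ∈ s := s.min'_mem hex
    simpa [s] using this
  have hagree : ∀ m, m < i → p m = q m := by
    intro m hm
    by_contra hc
    have : m ∈ s := by simpa [s] using hc
    exact absurd (s.min'_le m this) (not_le.mpr hm)
  rcases lt_or_gt_of_ne hi with hc | hc
  · exact absurd (h i) (ne_of_lt (cd_lt_of_agree p q i hagree hc))
  · exact absurd (h i).symm (ne_of_lt (cd_lt_of_agree q p i (fun m hm => (hagree m hm).symm) hc))


def stairF : ℕ → Finset (List ℕ)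
  | 0 => {[]}
  | (m+1) => ((Finset.range (m+1)) ×ˢ stairF m).image (fun x => x.1 :: x.2)

lemma cons_inj2 : Function.Injective (fun x : ℕ × List ℕ => x.1 :: x.2) := by
  intro ⟨a, t⟩ ⟨b, s⟩ h
  simp only [List.cons.injEq] at h
  exact Prod.ext h.1 h.2

lemma card_stairF (m : ℕ) : (stairF m).card = Nat.factorial m := by
  induction m with
  | zero => simp [stairF]
  | succ m ih =>
    rw [stairF, Finset.card_image_of_injective _ cons_inj2, Finset.card_product, card_range,
      ih, Nat.factorial_succ]

lemma length_of_mem_stairF {m : ℕ} {l : List ℕ} (h : l ∈ stairF m) : l.length = m := by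
  induction m generalizing l with
  | zero => simp only [stairF, Finset.mem_singleton] at h; simp [h]
  | succ m ih =>
    rw [stairF, Finset.mem_image] at h
    obtain ⟨⟨a, t⟩, hmem, rfl⟩ := h
    simp only [Finset.mem_product] at hmem
    simp [ih hmem.2]

lemma bound_of_mem_stairF {m : ℕ} {l : List ℕ} (h : l ∈ stairF m) :
    ∀ i, i < m → l.getD i 0 + i + 1 ≤ m := by
  induction m generalizing l with
  | zero => omega
  | succ m ih =>
    rw [stairF, Finset.mem_image] at h
    obtain ⟨⟨a, t⟩, hmem, rfl⟩ := h
    simp only [Finset.mem_product, Finset.mem_range] at hmem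
    intro i hi
    cases i with
    | zero =>
      have := hmem.1
      simp only [List.getD_cons_zero]
      omega
    | succ i =>
      have := ih hmem.2 i (by omega)
      simp only [List.getD_cons_succ]
      omega

lemma mem_stairF_of {m : ℕ} {l : List ℕ} (hlen : l.length = m)
    (hb : ∀ i, i < m → l.getD i 0 + i + 1 ≤ m) : l ∈ stairF m := by
  induction m generalizing l with
  | zero =>
    rw [List.length_eq_zero_iff] at hlen
    simp [stairF, hlen]
  | succ m ih =>
    cases l with
    | nil => simp at hlen
    | cons a t =>
      rw [stairF, Finset.mem_image]
      refine ⟨(a, t), ?_, rfl⟩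
      rw [Finset.mem_product, Finset.mem_range]
      refine ⟨by have := hb 0 (by omega); simp only [List.getD_cons_zero] at this; omega, ?_⟩
      have hlen' : t.length = m := by simpa using hlen
      apply ih hlen'
      intro i hi
      have := hb (i+1) (by omega)
      simp only [List.getD_cons_succ] at this
      omega

def AntiL (l : List ℕ) : Prop := ∀ i, i + 1 < l.length → l.getD (i+1) 0 ≤ l.getD i 0

instance : DecidablePred AntiL := fun l =>
  decidable_of_iff (∀ i, i < l.length → i + 1 < l.length → l.getD (i+1) 0 ≤ l.getD i 0)
    (by
      constructor
      · intro h i hi; exact h i (by omega) hi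
      · intro h i _ hi2; exact h i hi2)

def dropsL (l : List ℕ) : ℕ :=
  ((Finset.range (l.length - 1)).filter (fun i => l.getD (i+1) 0 < l.getD i 0)).card

def Hc (m k b : ℕ) : ℕ :=
  ((stairF m).filter (fun l => AntiL l ∧ dropsL l = k ∧ l.headI ≤ b)).card

lemma headI_getD (t : List ℕ) : t.headI = t.getD 0 0 := by cases t <;> rfl

lemma AntiL_cons (a : ℕ) (t : List ℕ) : AntiL (a :: t) ↔ t.headI ≤ a ∧ AntiL t := by
  constructor
  · intro h
    constructor
    · cases t with
      | nil => simp
      | cons b s =>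
        have := h 0 (by simp)
        simpa using this
    · intro i hi
      have := h (i+1) (by simp only [List.length_cons]; omega)
      simpa [List.getD_cons_succ] using this
  · rintro ⟨hh, ht⟩ i hi
    cases i with
    | zero =>
      simp only [List.getD_cons_succ, List.getD_cons_zero]
      rw [headI_getD] at hh
      exact hh
    | succ i =>
      simp only [List.getD_cons_succ]
      exact ht i (by simp only [List.length_cons] at hi; omega)

lemma card_filter_range_succ (m : ℕ) (P : ℕ → Prop) [DecidablePred P] :
    ((Finset.range (m+1)).filter P).card =
      (if P 0 then 1 else 0) + ((Finset.range m).filter (fun i => P (i+1))).card := by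
  rw [Finset.card_filter, Finset.card_filter, Finset.sum_range_succ']
  omega

lemma dropsL_cons (a : ℕ) (t : List ℕ) (ht : t ≠ []) :
    dropsL (a :: t) = (if t.headI < a then 1 else 0) + dropsL t := by
  have hlen : t.length - 1 + 1 = t.length := by
    cases t with
    | nil => exact absurd rfl ht
    | cons b s => simp
  unfold dropsL
  have h1 : (a :: t).length - 1 = t.length - 1 + 1 := by simp [hlen]
  rw [h1, card_filter_range_succ]
  simp only [List.getD_cons_succ, List.getD_cons_zero, ← headI_getD]

lemma card_filter_product {α β : Type*} (s : Finset α) (t : Finset β) (P : α → β → Prop)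
    [∀ a b, Decidable (P a b)] :
    ((s ×ˢ t).filter (fun x => P x.1 x.2)).card = ∑ a ∈ s, (t.filter (fun b => P a b)).card := by
  rw [Finset.card_filter, Finset.sum_product]
  exact Finset.sum_congr rfl (fun a _ => (Finset.card_filter _ _).symm)

lemma headI_bound {m : ℕ} {l : List ℕ} (hm : 1 ≤ m) (h : l ∈ stairF m) : l.headI + 1 ≤ m := by
  have := bound_of_mem_stairF h 0 (by omega)
  rw [headI_getD]
  omega

lemma nonempty_of_mem_stairF {m : ℕ} {l : List ℕ} (hm : 1 ≤ m) (h : l ∈ stairF m) : l ≠ [] := by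
  intro he
  have := length_of_mem_stairF h
  rw [he] at this
  simp at this
  omega

lemma Hc_split {m : ℕ} (hm : 1 ≤ m) (k b : ℕ) :
    Hc (m+1) k b = Hc m k b + ∑ a ∈ Finset.range (m+1),
      ((stairF m).filter (fun t => AntiL t ∧ dropsL t + 1 = k ∧ t.headI < a ∧ a ≤ b)).card := by
  unfold Hc
  rw [stairF, Finset.filter_image, Finset.card_image_of_injective _ cons_inj2,
    card_filter_product (Finset.range (m+1)) (stairF m)
      (fun a t => AntiL (a :: t) ∧ dropsL (a :: t) = k ∧ (a :: t).headI ≤ b)]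
  have hterm : ∀ a ∈ Finset.range (m+1),
      ((stairF m).filter (fun t => AntiL (a :: t) ∧ dropsL (a :: t) = k ∧ (a :: t).headI ≤ b)).card
      = ((stairF m).filter (fun t => t.headI = a ∧ AntiL t ∧ dropsL t = k ∧ a ≤ b)).card
        + ((stairF m).filter (fun t => AntiL t ∧ dropsL t + 1 = k ∧ t.headI < a ∧ a ≤ b)).card := by
    intro a _
    have hsplit : (stairF m).filter (fun t => AntiL (a :: t) ∧ dropsL (a :: t) = k ∧ (a :: t).headI ≤ b)
        = ((stairF m).filter (fun t => t.headI = a ∧ AntiL t ∧ dropsL t = k ∧ a ≤ b))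
          ∪ ((stairF m).filter (fun t => AntiL t ∧ dropsL t + 1 = k ∧ t.headI < a ∧ a ≤ b)) := by
      rw [← Finset.filter_or]
      apply Finset.filter_congr
      intro t htm
      have htne : t ≠ [] := nonempty_of_mem_stairF hm htm
      rw [AntiL_cons, dropsL_cons a t htne]
      show _ ↔ _
      constructor
      · rintro ⟨⟨hha, hat⟩, hdrop, hhb⟩
        rcases eq_or_lt_of_le hha with he | hl
        · left
          rw [if_neg (by omega)] at hdrop
          exact ⟨he, hat, by omega, by simpa using hhb⟩
        · right
          rw [if_pos hl] at hdrop
          exact ⟨hat, by omega, hl, by simpa using hhb⟩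
      · rintro (⟨he, hat, hd, hab⟩ | ⟨hat, hd, hl, hab⟩)
        · exact ⟨⟨by omega, hat⟩, by rw [if_neg (by omega)]; omega, by simpa using hab⟩
        · exact ⟨⟨by omega, hat⟩, by rw [if_pos hl]; omega, by simpa using hab⟩
    rw [hsplit, Finset.card_union_of_disjoint]
    rw [Finset.disjoint_left]
    intro t h1 h2
    simp only [Finset.mem_filter] at h1 h2
    omega
  rw [Finset.sum_congr rfl hterm, Finset.sum_add_distrib]
  congr 1
  have hfib := Finset.card_eq_sum_card_fiberwise
    (f := fun t : List ℕ => t.headI) (t := Finset.range (m+1))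
    (s := (stairF m).filter (fun t => AntiL t ∧ dropsL t = k ∧ t.headI ≤ b))
    (by
      intro t ht
      simp only [Finset.mem_coe, Finset.mem_filter] at ht
      have := headI_bound hm ht.1
      simp only [Finset.mem_coe, Finset.mem_range]
      omega)
  rw [hfib]
  apply Finset.sum_congr rfl
  intro a _
  congr 1
  rw [Finset.filter_filter]
  apply Finset.filter_congr
  intro t _
  show _ ↔ _
  constructor
  · rintro ⟨hh, hat, hd, hab⟩
    exact ⟨⟨hat, hd, by omega⟩, by omega⟩
  · rintro ⟨⟨hat, hd, hhb⟩, hh⟩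
    exact ⟨by omega, hat, hd, by omega⟩

lemma Hrec0 {m : ℕ} (hm : 1 ≤ m) (b : ℕ) : Hc (m+1) 0 b = Hc m 0 b := by
  rw [Hc_split hm]
  simp

lemma sum_range_choose_eq (b j : ℕ) : ∑ c ∈ Finset.range b, c.choose j = b.choose (j+1) := by
  induction b with
  | zero => simp
  | succ b ihb =>
    rw [Finset.sum_range_succ, ihb, Nat.choose_succ_succ']
    omega

lemma HrecS {m : ℕ} (hm : 1 ≤ m) (k b : ℕ) :
    Hc (m+1) (k+1) b = Hc m (k+1) b + ∑ c ∈ Finset.range (min b m), Hc m k c := by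
  rw [Hc_split hm]
  congr 1
  have hterm : ∀ a ∈ Finset.range (m+1),
      ((stairF m).filter (fun t => AntiL t ∧ dropsL t + 1 = k + 1 ∧ t.headI < a ∧ a ≤ b)).card
      = if 1 ≤ a ∧ a ≤ b then Hc m k (a-1) else 0 := by
    intro a _
    by_cases h1 : 1 ≤ a ∧ a ≤ b
    · rw [if_pos h1]
      unfold Hc
      congr 1
      apply Finset.filter_congr
      intro t _
      show _ ↔ _
      constructor
      · rintro ⟨hat, hd, hh, hab⟩
        exact ⟨hat, by omega, by omega⟩
      · rintro ⟨hat, hd, hh⟩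
        exact ⟨hat, by omega, by omega, h1.2⟩
    · rw [if_neg h1]
      rw [Finset.card_eq_zero, Finset.filter_eq_empty_iff]
      intro t _
      rintro ⟨hat, hd, hh, hab⟩
      omega
  rw [Finset.sum_congr rfl hterm, ← Finset.sum_filter]
  have hset : (Finset.range (m+1)).filter (fun a => 1 ≤ a ∧ a ≤ b)
      = (Finset.range (min b m)).image (· + 1) := by
    ext x
    simp only [Finset.mem_filter, Finset.mem_range, Finset.mem_image]
    constructor
    · rintro ⟨hx, h1, h2⟩
      exact ⟨x - 1, by omega, by omega⟩
    · rintro ⟨c, hc, rfl⟩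
      omega
  rw [hset, Finset.sum_image (by intro x _ y _ h; simp only at h; omega)]
  simp

lemma stairF_one : stairF 1 = {[0]} := by decide

lemma AntiL_nil : AntiL [] := by intro i hi; simp at hi

lemma AntiL_single (a : ℕ) : AntiL [a] := by intro i hi; simp at hi

lemma dropsL_nil : dropsL [] = 0 := rfl

lemma dropsL_single (a : ℕ) : dropsL [a] = 0 := by simp [dropsL]

lemma Hc_base0 (k b : ℕ) : Hc 0 k b = if k = 0 then 1 else 0 := by
  unfold Hc
  show ((stairF 0).filter _).card = _
  rw [show stairF 0 = {[]} from rfl, Finset.filter_singleton]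
  rcases eq_or_ne k 0 with rfl | hk
  · rw [if_pos ⟨AntiL_nil, dropsL_nil, by simp⟩]
    simp
  · rw [if_neg (by rw [dropsL_nil]; rintro ⟨-, h, -⟩; omega)]
    simp [hk]

lemma Hc_base1 (k b : ℕ) : Hc 1 k b = if k = 0 then 1 else 0 := by
  unfold Hc
  rw [stairF_one, Finset.filter_singleton]
  rcases eq_or_ne k 0 with rfl | hk
  · rw [if_pos ⟨AntiL_single 0, dropsL_single 0, by simp⟩]
    simp
  · rw [if_neg (by rw [dropsL_single]; rintro ⟨-, h, -⟩; omega)]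
    simp [hk]

lemma Hc_zero (m b : ℕ) : Hc m 0 b = 1 := by
  induction m with
  | zero => simp [Hc_base0]
  | succ m ih =>
    rcases Nat.eq_zero_or_pos m with rfl | hm
    · simp [Hc_base1]
    · rw [Hrec0 hm]
      exact ih

lemma Hc_clamp {m : ℕ} (k b : ℕ) (hb : m ≤ b) : Hc (m+1) k b = Hc (m+1) k m := by
  unfold Hc
  congr 1
  apply Finset.filter_congr
  intro t ht
  have := headI_bound (by omega) ht
  show _ ↔ _
  constructor
  · rintro ⟨h1, h2, h3⟩; exact ⟨h1, h2, by omega⟩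
  · rintro ⟨h1, h2, h3⟩; exact ⟨h1, h2, by omega⟩

lemma Hc_formula : ∀ (m k b : ℕ), b ≤ m →
    Hc (m+1) (k+1) b + (b.choose (k+2)) * (m.choose k) = (b.choose (k+1)) * (m.choose (k+1)) := by
  intro m
  induction m with
  | zero =>
    intro k b hb
    have hb0 : b = 0 := by omega
    subst hb0
    have h0 : Hc 1 (k+1) 0 = 0 := by rw [Hc_base1]; simp
    rw [h0, Nat.choose_zero_succ, Nat.choose_zero_succ]
    simp
  | succ m ih =>
    intro k b hb
    rcases Nat.lt_or_ge b (m+1) with hbm | hbm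
    · -- b ≤ m
      have hb' : b ≤ m := by omega
      rw [HrecS (by omega), show min b (m+1) = b by omega]
      cases k with
      | zero =>
        have hsum : ∑ c ∈ Finset.range b, Hc (m+1) 0 c = b := by
          simp [Hc_zero]
        rw [hsum]
        have h1 := ih 0 b hb'
        simp only [Nat.choose_zero_right, Nat.choose_one_right, mul_one, zero_add] at h1 ⊢
        have hr : b * (m+1) = b * m + b := by ring
        linarith [h1, hr]
      | succ k' =>
        have hsum0 : ∑ c ∈ Finset.range b,
            (Hc (m+1) (k'+1) c + (c.choose (k'+2)) * (m.choose k'))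
            = ∑ c ∈ Finset.range b, (c.choose (k'+1)) * (m.choose (k'+1)) :=
          Finset.sum_congr rfl (fun c hc => ih k' c (by
            simp only [Finset.mem_range] at hc; omega))
        rw [Finset.sum_add_distrib, ← Finset.sum_mul, ← Finset.sum_mul,
          sum_range_choose_eq, sum_range_choose_eq] at hsum0
        have h1 := ih (k'+1) b hb'
        have hP1 : (m+1).choose (k'+1) = m.choose k' + m.choose (k'+1) := Nat.choose_succ_succ _ _
        have hP2 : (m+1).choose (k'+2) = m.choose (k'+1) + m.choose (k'+2) := Nat.choose_succ_succ _ _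
        have e1 : b.choose (k'+3) * (m+1).choose (k'+1)
            = b.choose (k'+3) * m.choose k' + b.choose (k'+3) * m.choose (k'+1) := by
          rw [hP1]; ring
        have e2 : b.choose (k'+2) * (m+1).choose (k'+2)
            = b.choose (k'+2) * m.choose (k'+1) + b.choose (k'+2) * m.choose (k'+2) := by
          rw [hP2]; ring
        linarith [hsum0, h1, e1, e2]
    · -- b = m+1
      have hb1 : b = m + 1 := by omega
      subst hb1
      rw [HrecS (by omega), show min (m+1) (m+1) = m+1 by omega, Hc_clamp _ _ (by omega)]
      cases k with
      | zero =>
        have hsum : ∑ c ∈ Finset.range (m+1), Hc (m+1) 0 c = m + 1 := by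
          simp [Hc_zero]
        rw [hsum]
        have h1 := ih 0 m le_rfl
        simp only [Nat.choose_zero_right, Nat.choose_one_right, mul_one, zero_add] at h1 ⊢
        have eP : (m+1).choose 2 = m + m.choose 2 := by
          rw [show (2:ℕ) = 1 + 1 from rfl, Nat.choose_succ_succ', Nat.choose_one_right]
        have hr : (m+1) * (m+1) = m * m + 2*m + 1 := by ring
        linarith [h1, eP, hr]
      | succ k' =>
        have hsum0 : ∑ c ∈ Finset.range (m+1),
            (Hc (m+1) (k'+1) c + (c.choose (k'+2)) * (m.choose k'))
            = ∑ c ∈ Finset.range (m+1), (c.choose (k'+1)) * (m.choose (k'+1)) :=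
          Finset.sum_congr rfl (fun c hc => ih k' c (by
            simp only [Finset.mem_range] at hc; omega))
        rw [Finset.sum_add_distrib, ← Finset.sum_mul, ← Finset.sum_mul,
          sum_range_choose_eq, sum_range_choose_eq] at hsum0
        have h1 := ih (k'+1) m le_rfl
        have hA1 : (m+1).choose (k'+3) = m.choose (k'+2) + m.choose (k'+3) := Nat.choose_succ_succ _ _
        have hA2 : (m+1).choose (k'+1) = m.choose k' + m.choose (k'+1) := Nat.choose_succ_succ _ _
        have hA3 : (m+1).choose (k'+2) = m.choose (k'+1) + m.choose (k'+2) := Nat.choose_succ_succ _ _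
        have e1 : (m+1).choose (k'+3) * (m+1).choose (k'+1)
            = (m+1).choose (k'+3) * m.choose k' + (m+1).choose (k'+3) * m.choose (k'+1) := by
          rw [hA2]; ring
        have e2 : (m+1).choose (k'+2) * (m+1).choose (k'+2)
            = (m+1).choose (k'+2) * m.choose (k'+1) + (m+1).choose (k'+2) * m.choose (k'+2) := by
          rw [hA3]; ring
        have e3 : (m+1).choose (k'+3) * m.choose (k'+1)
            = m.choose (k'+2) * m.choose (k'+1) + m.choose (k'+3) * m.choose (k'+1) := by
          rw [hA1]; ring
        have e4 : (m+1).choose (k'+2) * m.choose (k'+2)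
            = m.choose (k'+1) * m.choose (k'+2) + m.choose (k'+2) * m.choose (k'+2) := by
          rw [hA3]; ring
        linarith [hsum0, h1, e1, e2, e3, e4]


def codeList (p : Equiv.Perm (Fin n)) : List ℕ := List.ofFn (fun i => cd p i)

lemma codeList_length (p : Equiv.Perm (Fin n)) : (codeList p).length = n := by
  simp [codeList]

lemma codeList_getD (p : Equiv.Perm (Fin n)) (i : ℕ) (h : i < n) :
    (codeList p).getD i 0 = cd p ⟨i, h⟩ := by
  unfold codeList
  rw [List.getD_eq_getElem?_getD]
  simp [h]

lemma codeList_mem (p : Equiv.Perm (Fin n)) : codeList p ∈ stairF n := by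
  apply mem_stairF_of (codeList_length p)
  intro i hi
  rw [codeList_getD p i hi]
  have := cd_bound p ⟨i, hi⟩
  exact this

lemma codeList_inj {p q : Equiv.Perm (Fin n)} (h : codeList p = codeList q) : p = q := by
  apply cd_inj
  intro i
  have h1 := codeList_getD p i.val i.isLt
  have h2 := codeList_getD q i.val i.isLt
  rw [h] at h1
  rw [h1] at h2
  simpa using h2

lemma avoids_iff_anti (p : Equiv.Perm (Fin n)) : Avoids132 p ↔ AntiL (codeList p) := by
  rw [avoids_iff]
  unfold AntiL
  rw [codeList_length]
  constructor
  · intro h i hi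
    rw [codeList_getD p (i+1) hi, codeList_getD p i (by omega)]
    exact h i hi
  · intro h i hi
    have := h i hi
    rw [codeList_getD p (i+1) hi, codeList_getD p i (by omega)] at this
    exact this

lemma drops_codeList (p : Equiv.Perm (Fin n)) : dropsL (codeList p) = (DescentSet p).card := by
  unfold dropsL DescentSet
  rw [codeList_length]
  apply Finset.card_bij (fun i _ => i + 1)
  · intro i hi
    simp only [Finset.mem_filter, Finset.mem_range] at hi ⊢
    obtain ⟨hir, hdrop⟩ := hi
    have hi1 : i + 1 < n := by omega
    rw [codeList_getD p (i+1) hi1, codeList_getD p i (by omega)] at hdrop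
    refine ⟨by omega, ⟨by omega, hi1⟩, ?_⟩
    have := (cd_adj p i hi1).mpr hdrop
    have he : (⟨i + 1 - 1, by omega⟩ : Fin n) = ⟨i, by omega⟩ := Fin.ext (by show i + 1 - 1 = i; omega)
    rw [he]
    exact this
  · intro i1 h1 i2 h2 he
    omega
  · intro j hj
    simp only [Finset.mem_filter, Finset.mem_range] at hj
    obtain ⟨hjr, ⟨hj1, hj2⟩, hlt⟩ := hj
    refine ⟨j - 1, ?_, by omega⟩
    simp only [Finset.mem_filter, Finset.mem_range]
    have hj1n : j - 1 + 1 < n := by omega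
    refine ⟨by omega, ?_⟩
    rw [codeList_getD p (j - 1 + 1) hj1n, codeList_getD p (j-1) (by omega)]
    apply (cd_adj p (j-1) hj1n).mp
    have he1 : (⟨j - 1 + 1, hj1n⟩ : Fin n) = ⟨j, hj2⟩ := Fin.ext (by show j - 1 + 1 = j; omega)
    rw [he1]
    exact hlt

lemma count_eq_Hc (n k : ℕ) (hn : 0 < n) :
    Nat.card {p : Equiv.Perm (Fin n) // Avoids132 p ∧ (DescentSet p).card = k} = Hc n k n := by
  classical
  rw [Nat.card_eq_fintype_card, Fintype.card_subtype]
  unfold Hc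
  apply Finset.card_bij (fun p _ => codeList p)
  · intro p hp
    simp only [Finset.mem_filter, Finset.mem_univ, true_and] at hp
    rw [Finset.mem_filter]
    refine ⟨codeList_mem p, (avoids_iff_anti p).mp hp.1, ?_, ?_⟩
    · rw [drops_codeList p]
      exact hp.2
    · have := headI_bound hn (codeList_mem p)
      omega
  · intro p1 _ p2 _ he
    exact codeList_inj he
  · intro l hl
    rw [Finset.mem_filter] at hl
    obtain ⟨hls, hanti, hdrops, _⟩ := hl
    obtain ⟨p, _, hpl⟩ := Finset.surj_on_of_inj_on_of_card_le
      (s := (Finset.univ : Finset (Equiv.Perm (Fin n)))) (t := stairF n)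
      (fun p _ => codeList p) (fun p _ => codeList_mem p)
      (fun p1 p2 _ _ he => codeList_inj he)
      (by rw [card_stairF, Finset.card_univ, Fintype.card_perm, Fintype.card_fin]) l hls
    refine ⟨p, ?_, hpl.symm⟩
    simp only [Finset.mem_filter, Finset.mem_univ, true_and]
    constructor
    · rw [avoids_iff_anti p, ← hpl]
      exact hanti
    · rw [← drops_codeList p, ← hpl]
      exact hdrops

end Stmt3

/-- For `0 ≤ k ≤ n-1`, the number of 132-avoiding permutations of `[n]`
with exactly `k` descents equals `(1/n) · C(n,k) · C(n,k+1)` (the Narayana number). -/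
theorem stmt_3 (n k : ℕ) (hn : 0 < n) (hk : k ≤ n - 1) :
    (Nat.card {p : Equiv.Perm (Fin n) // Avoids132 p ∧ (DescentSet p).card = k} : ℚ) =
      (1 / n) * (n.choose k) * (n.choose (k + 1)) := by
  rw [Stmt3.count_eq_Hc n k hn]
  have hn0 : (n : ℚ) ≠ 0 := by positivity
  rcases k with _ | k'
  · rw [Stmt3.Hc_zero, Nat.choose_zero_right, Nat.choose_one_right]
    push_cast
    field_simp
  · obtain ⟨N, rfl⟩ : ∃ N, n = N + 1 := ⟨n - 1, by omega⟩
    have hk' : k' + 1 ≤ N := by omega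
    rw [Stmt3.Hc_clamp _ _ (by omega : N ≤ N + 1)]
    have hform := Stmt3.Hc_formula N k' N le_rfl
    -- ℕ binomial identities
    have g1 : ∀ j : ℕ, (N+1) * N.choose j = (N+1).choose (j+1) * (j+1) := by
      intro j
      simpa [Nat.succ_eq_add_one] using Nat.add_one_mul_choose_eq N j
    have g2 : ∀ j : ℕ, (N+1) * N.choose j = (N+1).choose j * (N+1-j) := by
      intro j
      rw [g1 j, Nat.choose_succ_right_eq]
    -- cast everything to ℚ
    have hle1 : k' + 1 ≤ N := hk'
    show (Stmt3.Hc (N+1) (k'+1) N : ℚ) = 1 / ((N+1 : ℕ) : ℚ) * ((N+1).choose (k'+1) : ℚ) * ((N+1).choose (k'+2) : ℚ)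
    set t : ℚ := (N : ℚ) with ht
    set u : ℚ := (k' : ℚ) with hu
    set a : ℚ := (N.choose (k'+1) : ℚ) with ha
    set b : ℚ := (N.choose (k'+2) : ℚ) with hb
    set c : ℚ := (N.choose k' : ℚ) with hc
    set A : ℚ := ((N+1).choose (k'+1) : ℚ) with hA
    set B : ℚ := ((N+1).choose (k'+2) : ℚ) with hB
    set Hq : ℚ := (Stmt3.Hc (N+1) (k'+1) N : ℚ) with hHq
    have h1 : (t+1) * a = (u+2) * B := by
      have hq : ((N:ℚ)+1) * (N.choose (k'+1) : ℚ) = ((N+1).choose (k'+2) : ℚ) * ((k':ℚ)+2) := by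
        exact_mod_cast g1 (k'+1)
      rw [ht, hu, ha, hB]
      linear_combination hq
    have h2 : (t+1) * a = (t-u) * A := by
      have hn2 : N + 1 - (k'+1) = N - k' := by omega
      have hq : ((N:ℚ)+1) * (N.choose (k'+1) : ℚ)
          = ((N+1).choose (k'+1) : ℚ) * (((N - k' : ℕ) : ℕ) : ℚ) := by
        exact_mod_cast (g2 (k'+1)).trans (by rw [hn2])
      rw [Nat.cast_sub (by omega : k' ≤ N)] at hq
      rw [ht, hu, ha, hA]
      linear_combination hq
    have h3 : (t+1) * b = (t-u-1) * B := by
      have hn3 : N + 1 - (k'+2) = N - (k'+1) := by omega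
      have hq : ((N:ℚ)+1) * (N.choose (k'+2) : ℚ)
          = ((N+1).choose (k'+2) : ℚ) * (((N - (k'+1) : ℕ) : ℕ) : ℚ) := by
        exact_mod_cast (g2 (k'+2)).trans (by rw [hn3])
      rw [Nat.cast_sub (by omega : k' + 1 ≤ N)] at hq
      rw [ht, hu, hb, hB]
      push_cast at hq ⊢
      linear_combination hq
    have h4 : (t+1) * c = (u+1) * A := by
      have hq : ((N:ℚ)+1) * (N.choose k' : ℚ) = ((N+1).choose (k'+1) : ℚ) * ((k':ℚ)+1) := by
        exact_mod_cast g1 k'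
      rw [ht, hu, hc, hA]
      linear_combination hq
    have hformq : Hq + b * c = a * a := by
      rw [hHq, hb, hc, ha]
      exact_mod_cast hform
    have htne : (t + 1) ≠ 0 := by rw [ht]; positivity
    have key : (t+1) * ((t+1) * Hq) = (t+1) * (A * B) := by
      linear_combination ((t+1)^2) * hformq + ((t+1)*a) * h1 + ((u+2)*B) * h2
        - ((t+1)*c) * h3 - ((t-u-1)*B) * h4
    have key2 : (t+1) * Hq = A * B := mul_left_cancel₀ htne key
    have hcast : ((N+1 : ℕ) : ℚ) = t + 1 := by rw [ht]; push_cast; ring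
    rw [hcast]
    field_simp
    linear_combination key2
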